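/- Let Σ₁ = (A₁,B₁,C₁,D₁; X₁,U,Y) and Σ₂ = (A₂,B₂,C₂,D₂; X₂,U,Y) be minimal systems on complex Hilbert spaces realizing the same transfer function, i.e. D₁ = D₂ and C₁∘A₁ⁿ∘B₁ = C₂∘A₂ⁿ∘B₂ for all n ≥ 0. Then Σ₁ and Σ₂ are weakly similar: there exists an injective, closed, densely defined linear operator Z from X₁ to X₂ with dense range such that range(B₁) ⊆ dom(Z), Z(B₁u) = B₂u for all u ∈ U, A₁(dom Z) ⊆ dom Z, Z(A₁x) = A₂(Zx) for all x ∈ dom(Z), and C₁x = C₂(Zx) for all x ∈ dom(Z). -/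

import Mathlib

/-!
STATEMENT 19: Any two minimal realizations of the same transfer function on
complex Hilbert spaces are weakly similar: there is an injective, closed, densely
defined linear operator Z from X₁ to X₂ with dense range intertwining the two
systems.
-/

noncomputable section

open ContinuousLinearMap

variable {X₁ X₂ U Y : Type*}
  [NormedAddCommGroup X₁] [InnerProductSpace ℂ X₁] [CompleteSpace X₁]
  [NormedAddCommGroup X₂] [InnerProductSpace ℂ X₂] [CompleteSpace X₂]
  [NormedAddCommGroup U] [InnerProductSpace ℂ U] [CompleteSpace U]
  [NormedAddCommGroup Y] [InnerProductSpace ℂ Y] [CompleteSpace Y]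

/-- The controllable subspace `X^c` of the system. -/
def contSub {W : Type*} [NormedAddCommGroup W] [InnerProductSpace ℂ W] [CompleteSpace W]
    (A : W →L[ℂ] W) (B : U →L[ℂ] W) : Submodule ℂ W :=
  (Submodule.span ℂ (⋃ n : ℕ, Set.range fun u : U => (A ^ n) (B u))).topologicalClosure

/-- The observable subspace `X^o` of the system. -/
def obsSub {W : Type*} [NormedAddCommGroup W] [InnerProductSpace ℂ W] [CompleteSpace W]
    (A : W →L[ℂ] W) (C : W →L[ℂ] Y) : Submodule ℂ W :=
  (Submodule.span ℂ (⋃ n : ℕ, Set.range fun y : Y =>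
    ((ContinuousLinearMap.adjoint A) ^ n) ((ContinuousLinearMap.adjoint C) y))).topologicalClosure

/-- Observability implies that a vector annihilated by all `C ∘ Aⁿ` vanishes. -/
lemma obs_eq_zero' {W : Type*} [NormedAddCommGroup W] [InnerProductSpace ℂ W] [CompleteSpace W]
    (A : W →L[ℂ] W) (C : W →L[ℂ] Y) (h : obsSub A C = ⊤)
    {x : W} (hx : ∀ n : ℕ, C ((A ^ n) x) = 0) : x = 0 := by
  rw [obsSub, Submodule.topologicalClosure_eq_top_iff] at h
  have hmem : x ∈ (Submodule.span ℂ (⋃ n : ℕ, Set.range fun y : Y =>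
      ((ContinuousLinearMap.adjoint A) ^ n) ((ContinuousLinearMap.adjoint C) y)))ᗮ := by
    rw [Submodule.mem_orthogonal]
    intro u hu
    induction hu using Submodule.span_induction with
    | mem u hu =>
        obtain ⟨s, ⟨n, rfl⟩, hs⟩ := hu
        obtain ⟨y, rfl⟩ := hs
        have hpow : (ContinuousLinearMap.adjoint A) ^ n
            = ContinuousLinearMap.adjoint (A ^ n) := by
          rw [← star_eq_adjoint, ← star_eq_adjoint, ← star_pow]
        rw [hpow, ContinuousLinearMap.adjoint_inner_left,
          ContinuousLinearMap.adjoint_inner_left, hx n, inner_zero_right]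
    | zero => simp
    | add u v _ _ hu hv => rw [inner_add_left, hu, hv, add_zero]
    | smul c u _ hu => rw [inner_smul_left, hu, mul_zero]
  rw [h] at hmem
  exact hmem

theorem statement19
    (A₁ : X₁ →L[ℂ] X₁) (B₁ : U →L[ℂ] X₁) (C₁ : X₁ →L[ℂ] Y) (D₁ : U →L[ℂ] Y)
    (A₂ : X₂ →L[ℂ] X₂) (B₂ : U →L[ℂ] X₂) (C₂ : X₂ →L[ℂ] Y) (D₂ : U →L[ℂ] Y)
    (hc₁ : contSub A₁ B₁ = ⊤) (ho₁ : obsSub A₁ C₁ = ⊤)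
    (hc₂ : contSub A₂ B₂ = ⊤) (ho₂ : obsSub A₂ C₂ = ⊤)
    (hD : D₁ = D₂)
    (hmom : ∀ n : ℕ, C₁.comp ((A₁ ^ n).comp B₁) = C₂.comp ((A₂ ^ n).comp B₂)) :
    ∃ Z : X₁ →ₗ.[ℂ] X₂,
      -- densely defined
      Dense (Z.domain : Set X₁)
      -- closed
      ∧ IsClosed (Z.graph : Set (X₁ × X₂))
      -- injective
      ∧ (∀ x y : Z.domain, Z x = Z y → (x : X₁) = (y : X₁))
      -- dense range
      ∧ Dense (Set.range fun x : Z.domain => Z x)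
      -- Z B₁ = B₂
      ∧ (∀ u : U, ∃ h : B₁ u ∈ Z.domain, Z ⟨B₁ u, h⟩ = B₂ u)
      -- Z A₁ = A₂ Z on dom Z
      ∧ (∀ x : Z.domain, ∃ h : A₁ (x : X₁) ∈ Z.domain, Z ⟨A₁ (x : X₁), h⟩ = A₂ (Z x))
      -- C₁ = C₂ Z on dom Z
      ∧ (∀ x : Z.domain, C₁ (x : X₁) = C₂ (Z x)) := by
  classical
  set S : Set (X₁ × X₂) :=
    ⋃ n : ℕ, Set.range fun u : U => ((A₁ ^ n) (B₁ u), (A₂ ^ n) (B₂ u)) with hS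
  set G : Submodule ℂ (X₁ × X₂) := (Submodule.span ℂ S).topologicalClosure with hG
  -- membership of the generators
  have memS : ∀ (n : ℕ) (u : U), ((A₁ ^ n) (B₁ u), (A₂ ^ n) (B₂ u)) ∈ G := by
    intro n u
    exact (Submodule.span ℂ S).le_topologicalClosure
      (Submodule.subset_span (Set.mem_iUnion.mpr ⟨n, ⟨u, rfl⟩⟩))
  -- every element of G satisfies the moment identities
  have key : ∀ k : ℕ, ∀ p ∈ G, C₁ ((A₁ ^ k) p.1) = C₂ ((A₂ ^ k) p.2) := by
    intro k p hp
    set f : (X₁ × X₂) →L[ℂ] Y :=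
      (C₁.comp (A₁ ^ k)).comp (ContinuousLinearMap.fst ℂ X₁ X₂)
        - (C₂.comp (A₂ ^ k)).comp (ContinuousLinearMap.snd ℂ X₁ X₂) with hf
    have hker : G ≤ f.ker := by
      apply Submodule.topologicalClosure_minimal
      · rw [Submodule.span_le]
        rintro q hq
        obtain ⟨s, ⟨n, rfl⟩, hs⟩ := hq
        obtain ⟨u, rfl⟩ := hs
        have := ContinuousLinearMap.ext_iff.mp (hmom (k + n)) u
        simp only [ContinuousLinearMap.comp_apply, pow_add,
          ContinuousLinearMap.mul_apply] at this
        show f _ = 0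
        simp only [f, ContinuousLinearMap.sub_apply, ContinuousLinearMap.comp_apply,
          ContinuousLinearMap.coe_fst', ContinuousLinearMap.coe_snd', this, sub_self]
      · exact isClosed_ker f
    have h2 : C₁ ((A₁ ^ k) p.1) - C₂ ((A₂ ^ k) p.2) = 0 := hker hp
    exact sub_eq_zero.mp h2
  -- G is the graph of a partial linear map
  have hg : ∀ (p : X₁ × X₂), p ∈ G → p.1 = 0 → p.2 = 0 := by
    intro p hp hp1
    refine obs_eq_zero' A₂ C₂ ho₂ (fun n => ?_)
    rw [← key n p hp, hp1, map_zero, map_zero]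
  refine ⟨G.toLinearPMap, ?_, ?_, ?_, ?_, ?_, ?_, ?_⟩
  case _ =>
    -- densely defined
    have hdom : Submodule.span ℂ (⋃ n : ℕ, Set.range fun u : U => (A₁ ^ n) (B₁ u))
        ≤ G.toLinearPMap.domain := by
      rw [Submodule.span_le]
      rintro q hq
      obtain ⟨s, ⟨n, rfl⟩, hs⟩ := hq
      obtain ⟨u, rfl⟩ := hs
      rw [Submodule.toLinearPMap_domain]
      exact ⟨_, memS n u, rfl⟩
    have htop : G.toLinearPMap.domain.topologicalClosure = ⊤ := by
      rw [eq_top_iff, ← hc₁, contSub]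
      exact Submodule.topologicalClosure_mono hdom
    rw [← Submodule.dense_iff_topologicalClosure_eq_top] at htop
    exact htop
  case _ =>
    -- closed graph
    rw [Submodule.toLinearPMap_graph_eq G hg]
    exact Submodule.isClosed_topologicalClosure _
  case _ =>
    -- injective
    intro x y hxy
    have hx : ((x : X₁), G.toLinearPMap x) ∈ G := G.mem_graph_toLinearPMap hg x
    have hy : ((y : X₁), G.toLinearPMap y) ∈ G := G.mem_graph_toLinearPMap hg y
    have hsub : ((x : X₁) - (y : X₁), G.toLinearPMap x - G.toLinearPMap y) ∈ G :=
      G.sub_mem hx hy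
    have hz : (x : X₁) - (y : X₁) = 0 := by
      refine obs_eq_zero' A₁ C₁ ho₁ (fun n => ?_)
      have := key n _ hsub
      simp only [hxy, sub_self, map_zero] at this
      exact this
    exact sub_eq_zero.mp hz
  case _ =>
    -- dense range
    have hrange : (Set.range fun x : G.toLinearPMap.domain => G.toLinearPMap x)
        = (G.map (LinearMap.snd ℂ X₁ X₂) : Set X₂) := by
      rw [← Submodule.toLinearPMap_range G hg]
      rfl
    rw [hrange]
    have hcod : Submodule.span ℂ (⋃ n : ℕ, Set.range fun u : U => (A₂ ^ n) (B₂ u))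
        ≤ G.map (LinearMap.snd ℂ X₁ X₂) := by
      rw [Submodule.span_le]
      rintro q hq
      obtain ⟨s, ⟨n, rfl⟩, hs⟩ := hq
      obtain ⟨u, rfl⟩ := hs
      exact ⟨_, memS n u, rfl⟩
    have htop : (G.map (LinearMap.snd ℂ X₁ X₂)).topologicalClosure = ⊤ := by
      rw [eq_top_iff, ← hc₂, contSub]
      exact Submodule.topologicalClosure_mono hcod
    rw [← Submodule.dense_iff_topologicalClosure_eq_top] at htop
    exact htop
  case _ =>
    -- Z B₁ = B₂
    intro u
    have hmem : (B₁ u, B₂ u) ∈ G := by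
      have := memS 0 u
      simpa using this
    have hmem' : (B₁ u, B₂ u) ∈ G.toLinearPMap.graph := by
      rwa [Submodule.toLinearPMap_graph_eq G hg]
    rw [LinearPMap.mem_graph_iff] at hmem'
    obtain ⟨y, hy1, hy2⟩ := hmem'
    have hd : B₁ u ∈ G.toLinearPMap.domain := by
      show (B₁ u, B₂ u).1 ∈ _; rw [← hy1]; exact y.2
    refine ⟨hd, ?_⟩
    have heq : (⟨B₁ u, hd⟩ : G.toLinearPMap.domain) = y := Subtype.ext hy1.symm
    rw [heq]; exact hy2
  case _ =>
    -- Z A₁ = A₂ Z on dom Z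
    intro x
    have hx : ((x : X₁), G.toLinearPMap x) ∈ G := G.mem_graph_toLinearPMap hg x
    -- apply A₁ ×  A₂
    set L : (X₁ × X₂) →L[ℂ] (X₁ × X₂) := A₁.prodMap A₂ with hL
    have hmaps : Set.MapsTo L (Submodule.span ℂ S : Set (X₁ × X₂))
        (Submodule.span ℂ S : Set (X₁ × X₂)) := by
      intro q hq
      induction hq using Submodule.span_induction with
      | mem q hq =>
          obtain ⟨s, ⟨n, rfl⟩, hs⟩ := hq
          obtain ⟨u, rfl⟩ := hs
          refine Submodule.subset_span (Set.mem_iUnion.mpr ⟨n + 1, ⟨u, ?_⟩⟩)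
          simp [L, pow_succ', ContinuousLinearMap.mul_apply]
      | zero => simpa using (Submodule.span ℂ S).zero_mem
      | add q r _ _ hq hr => simpa using (Submodule.span ℂ S).add_mem hq hr
      | smul c q _ hq => simpa using (Submodule.span ℂ S).smul_mem c hq
    have hLx : (A₁ (x : X₁), A₂ (G.toLinearPMap x)) ∈ G := by
      have h1 : ((x : X₁), G.toLinearPMap x) ∈ closure
          ((Submodule.span ℂ S : Submodule ℂ (X₁ × X₂)) : Set (X₁ × X₂)) := hx
      have h2 := map_mem_closure L.continuous h1 hmaps
      exact h2
    have hmem' : (A₁ (x : X₁), A₂ (G.toLinearPMap x)) ∈ G.toLinearPMap.graph := by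
      rwa [Submodule.toLinearPMap_graph_eq G hg]
    rw [LinearPMap.mem_graph_iff] at hmem'
    obtain ⟨y, hy1, hy2⟩ := hmem'
    have hd : A₁ (x : X₁) ∈ G.toLinearPMap.domain := by
      show (A₁ (x : X₁), A₂ (G.toLinearPMap x)).1 ∈ _; rw [← hy1]; exact y.2
    refine ⟨hd, ?_⟩
    have heq : (⟨A₁ (x : X₁), hd⟩ : G.toLinearPMap.domain) = y := Subtype.ext hy1.symm
    rw [heq]; exact hy2
  case _ =>
    -- C₁ = C₂ Z on dom Z
    intro x
    have hx : ((x : X₁), G.toLinearPMap x) ∈ G := G.mem_graph_toLinearPMap hg x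
    have := key 0 _ hx
    simpa using this


end
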